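/- Let γ₁, γ₂ > 0 with γ₁ ≠ γ₂. For every μ ∈ (0, 1), γ₁ · μ(1 − μ) · (log(γ₁/γ₂))² / (1 + (γ₁ − 1)μ)² ≤ c₁ · D(f(μ, γ₁) ‖ f(μ, γ₂)), where c₁ = [γ₁ (log(γ₁/γ₂))² / min{1, γ₁}²] · [max{(γ₁ + γ₂)/2, 1}² / (√γ₁ − √γ₂)²]. That is, the conditional variance of the single-step log-likelihood-ratio increment is at most c₁ times its conditional expectation. -/

import Mathlib

/-- The declaration probability function `f(μ, γ) = γμ/(1 + (γ − 1)μ)`. -/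
noncomputable def declProb (μ γ : ℝ) : ℝ := γ * μ / (1 + (γ - 1) * μ)

/-- Kullback–Leibler divergence between `Bernoulli(p)` and `Bernoulli(q)`. -/
noncomputable def klBernoulli (p q : ℝ) : ℝ :=
  p * Real.log (p / q) + (1 - p) * Real.log ((1 - p) / (1 - q))

/-- Let `γ₁, γ₂ > 0` with `γ₁ ≠ γ₂`. For every `μ ∈ (0, 1)`,
`γ₁·μ(1−μ)·(log(γ₁/γ₂))²/(1 + (γ₁−1)μ)² ≤ c₁·D(f(μ,γ₁) ‖ f(μ,γ₂))`, where
`c₁ = [γ₁(log(γ₁/γ₂))²/min{1,γ₁}²]·[max{(γ₁+γ₂)/2, 1}²/(√γ₁ − √γ₂)²]`: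
the conditional variance of the single-step log-likelihood-ratio increment is at most
`c₁` times its conditional expectation. -/

lemma aux_log {a b : ℝ} (ha : 0 < a) (hb : 0 < b) :
    2*a - 2*(Real.sqrt a * Real.sqrt b) ≤ a * Real.log (a/b) := by
  have hsa := Real.sqrt_pos.mpr ha
  have hsb := Real.sqrt_pos.mpr hb
  have hlog : Real.log (Real.sqrt b / Real.sqrt a) ≤ Real.sqrt b / Real.sqrt a - 1 :=
    Real.log_le_sub_one_of_pos (by positivity)
  have h2 : Real.log (a/b) = -(2 * Real.log (Real.sqrt b / Real.sqrt a)) := by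
    rw [Real.log_div ha.ne' hb.ne', Real.log_div hsb.ne' hsa.ne',
      Real.log_sqrt ha.le, Real.log_sqrt hb.le]
    ring
  rw [h2]
  have key : a * (Real.sqrt b / Real.sqrt a) = Real.sqrt a * Real.sqrt b := by
    field_simp
    nlinarith [Real.mul_self_sqrt ha.le]
  have h3 : a * Real.log (Real.sqrt b / Real.sqrt a) ≤ Real.sqrt a * Real.sqrt b - a := by
    have := mul_le_mul_of_nonneg_left hlog ha.le
    rwa [mul_sub, key, mul_one] at this
  linarith

lemma kl_ge_hellinger {p q : ℝ} (hp : p ∈ Set.Ioo (0:ℝ) 1) (hq : q ∈ Set.Ioo (0:ℝ) 1) :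
    2 - 2*(Real.sqrt p * Real.sqrt q) - 2*(Real.sqrt (1-p) * Real.sqrt (1-q))
      ≤ klBernoulli p q := by
  have h1 := aux_log hp.1 hq.1
  have h2 := aux_log (by linarith [hp.2] : (0:ℝ) < 1 - p) (by linarith [hq.2] : (0:ℝ) < 1 - q)
  unfold klBernoulli
  linarith

set_option maxHeartbeats 1000000 in
theorem variance_le_const_mul_kl
    (γ₁ γ₂ : ℝ) (hγ₁ : 0 < γ₁) (hγ₂ : 0 < γ₂) (hne : γ₁ ≠ γ₂)
    (μ : ℝ) (hμ : μ ∈ Set.Ioo (0 : ℝ) 1) :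
    γ₁ * (μ * (1 - μ)) * Real.log (γ₁ / γ₂) ^ 2 / (1 + (γ₁ - 1) * μ) ^ 2
      ≤ (γ₁ * Real.log (γ₁ / γ₂) ^ 2 / min 1 γ₁ ^ 2)
          * (max ((γ₁ + γ₂) / 2) 1 ^ 2 / (Real.sqrt γ₁ - Real.sqrt γ₂) ^ 2)
          * klBernoulli (declProb μ γ₁) (declProb μ γ₂) := by
  obtain ⟨hμ0, hμ1⟩ := hμ
  have hν : (0:ℝ) < 1 - μ := by linarith
  set d₁ : ℝ := 1 + (γ₁ - 1) * μ with hd₁def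
  set d₂ : ℝ := 1 + (γ₂ - 1) * μ with hd₂def
  have hpdef : declProb μ γ₁ = γ₁ * μ / d₁ := rfl
  have hqdef : declProb μ γ₂ = γ₂ * μ / d₂ := rfl
  clear_value d₁ d₂
  have hd₁ : 0 < d₁ := by
    rw [hd₁def]; linarith only [mul_pos hγ₁ hμ0, hν]
  have hd₂ : 0 < d₂ := by
    rw [hd₂def]; linarith only [mul_pos hγ₂ hμ0, hν]
  set g₁ : ℝ := Real.sqrt γ₁ with hg₁def
  set g₂ : ℝ := Real.sqrt γ₂ with hg₂def
  clear_value g₁ g₂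
  have hg₁ : 0 < g₁ := by rw [hg₁def]; exact Real.sqrt_pos.mpr hγ₁
  have hg₂ : 0 < g₂ := by rw [hg₂def]; exact Real.sqrt_pos.mpr hγ₂
  have e₁ : g₁ ^ 2 = γ₁ := by rw [hg₁def]; exact Real.sq_sqrt hγ₁.le
  have e₂ : g₂ ^ 2 = γ₂ := by rw [hg₂def]; exact Real.sq_sqrt hγ₂.le
  have hgne : g₁ ≠ g₂ := by
    intro h
    exact hne (by rw [← e₁, ← e₂, h])
  have hG : (0:ℝ) < (g₁ - g₂)^2 := by
    have h' : g₁ - g₂ ≠ 0 := sub_ne_zero.mpr hgne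
    positivity
  have hpmem : declProb μ γ₁ ∈ Set.Ioo (0:ℝ) 1 := by
    rw [hpdef]
    refine ⟨div_pos (mul_pos hγ₁ hμ0) hd₁, ?_⟩
    rw [div_lt_one hd₁, hd₁def]; linarith only [hν]
  have hqmem : declProb μ γ₂ ∈ Set.Ioo (0:ℝ) 1 := by
    rw [hqdef]
    refine ⟨div_pos (mul_pos hγ₂ hμ0) hd₂, ?_⟩
    rw [div_lt_one hd₂, hd₂def]; linarith only [hν]
  have hKL := kl_ge_hellinger hpmem hqmem
  set s₁ : ℝ := Real.sqrt d₁ with hs₁def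
  set s₂ : ℝ := Real.sqrt d₂ with hs₂def
  clear_value s₁ s₂
  have hs₁ : 0 < s₁ := by rw [hs₁def]; exact Real.sqrt_pos.mpr hd₁
  have hs₂ : 0 < s₂ := by rw [hs₂def]; exact Real.sqrt_pos.mpr hd₂
  have es₁ : s₁ ^ 2 = d₁ := by rw [hs₁def]; exact Real.sq_sqrt hd₁.le
  have es₂ : s₂ ^ 2 = d₂ := by rw [hs₂def]; exact Real.sq_sqrt hd₂.le
  have hm : Real.sqrt μ ^ 2 = μ := Real.sq_sqrt hμ0.le
  have hsp : Real.sqrt (declProb μ γ₁) = g₁ * Real.sqrt μ / s₁ := by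
    rw [hpdef, Real.sqrt_div (by positivity) d₁, Real.sqrt_mul hγ₁.le, hg₁def, hs₁def]
  have hsq : Real.sqrt (declProb μ γ₂) = g₂ * Real.sqrt μ / s₂ := by
    rw [hqdef, Real.sqrt_div (by positivity) d₂, Real.sqrt_mul hγ₂.le, hg₂def, hs₂def]
  have h1p : 1 - declProb μ γ₁ = (1 - μ) / d₁ := by
    rw [hpdef]; field_simp; rw [hd₁def]; ring
  have h1q : 1 - declProb μ γ₂ = (1 - μ) / d₂ := by
    rw [hqdef]; field_simp; rw [hd₂def]; ring
  have hsp' : Real.sqrt (1 - declProb μ γ₁) = Real.sqrt (1-μ) / s₁ := by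
    rw [h1p, Real.sqrt_div hν.le d₁, hs₁def]
  have hsq' : Real.sqrt (1 - declProb μ γ₂) = Real.sqrt (1-μ) / s₂ := by
    rw [h1q, Real.sqrt_div hν.le d₂, hs₂def]
  have hprod1 : Real.sqrt (declProb μ γ₁) * Real.sqrt (declProb μ γ₂)
      = μ * (g₁ * g₂) / (s₁ * s₂) := by
    rw [hsp, hsq]
    field_simp
    linear_combination hm
  have hprod2 : Real.sqrt (1 - declProb μ γ₁) * Real.sqrt (1 - declProb μ γ₂)
      = (1 - μ) / (s₁ * s₂) := by
    rw [hsp', hsq', div_mul_div_comm, Real.mul_self_sqrt hν.le]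
  rw [hprod1, hprod2] at hKL
  set t : ℝ := μ * (g₁ * g₂) + (1 - μ) with htdef
  set S : ℝ := s₁ * s₂ with hSdef
  clear_value t S
  have hS : 0 < S := by rw [hSdef]; exact mul_pos hs₁ hs₂
  have hSS : S ^ 2 = d₁ * d₂ := by rw [hSdef, mul_pow, es₁, es₂]
  have ht : 0 < t := by
    rw [htdef]
    linarith only [mul_pos hμ0 (mul_pos hg₁ hg₂), hν]
  have hid : d₁ * d₂ - t ^ 2 = μ * (1-μ) * (g₁ - g₂)^2 := by
    rw [htdef, hd₁def, hd₂def]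
    linear_combination (-(μ^2*g₂^2) - μ*(1-μ)) * e₁ + (-(μ^2*γ₁) - μ*(1-μ)) * e₂
  have htS : t ≤ S := by
    have h2 : t ^ 2 ≤ S ^ 2 := by
      rw [hSS]
      linarith only [hid, mul_nonneg (mul_nonneg hμ0.le hν.le) hG.le]
    exact le_of_pow_le_pow_left₀ two_ne_zero hS.le h2
  have hKL2 : μ * (1-μ) * (g₁ - g₂)^2 / (d₁ * d₂)
      ≤ klBernoulli (declProb μ γ₁) (declProb μ γ₂) := by
    refine le_trans ?_ hKL
    rw [div_le_iff₀ (mul_pos hd₁ hd₂)]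
    have expand : (2 - 2*(μ * (g₁*g₂) / S) - 2*((1-μ)/S)) * (d₁ * d₂)
        = (2 * S - 2 * t) * S := by
      rw [← hSS, htdef]; field_simp; ring
    rw [expand]
    linarith only [sq_nonneg (S - t), hid, hSS]
  set L : ℝ := Real.log (γ₁ / γ₂) with hLdef
  set mn : ℝ := min 1 γ₁ with hmndef
  set M : ℝ := max ((γ₁ + γ₂) / 2) 1 with hMdef
  clear_value L mn M
  have hmn : 0 < mn := by rw [hmndef]; exact lt_min one_pos hγ₁
  have hM1 : (1:ℝ) ≤ M := by rw [hMdef]; exact le_max_right _ _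
  have hM2 : (γ₁ + γ₂)/2 ≤ M := by rw [hMdef]; exact le_max_left _ _
  have hmn_d1 : mn ≤ d₁ := by
    rw [hd₁def, hmndef]
    rcases le_total (1:ℝ) γ₁ with h | h
    · rw [min_eq_left h]
      linarith only [mul_nonneg (by linarith only [h] : (0:ℝ) ≤ γ₁ - 1) hμ0.le]
    · rw [min_eq_right h]
      linarith only [mul_nonneg (by linarith only [h] : (0:ℝ) ≤ 1 - γ₁) hν.le]
  have hd2_le : d₂ ≤ max 1 γ₂ := by
    rw [hd₂def]
    rcases le_total (1:ℝ) γ₂ with h | h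
    · rw [max_eq_right h]
      linarith only [mul_nonneg (by linarith only [h] : (0:ℝ) ≤ γ₂ - 1) hν.le]
    · rw [max_eq_left h]
      linarith only [mul_nonneg (by linarith only [h] : (0:ℝ) ≤ 1 - γ₂) hμ0.le]
  have hkey0 : mn * max 1 γ₂ ≤ M ^ 2 := by
    have hM0 : (0:ℝ) ≤ M := by linarith only [hM1]
    rcases le_total γ₂ 1 with h | h
    · rw [max_eq_left h]
      have hmn1 : mn ≤ 1 := by rw [hmndef]; exact min_le_left _ _
      have hMM : 1 * 1 ≤ M * M := mul_le_mul hM1 hM1 zero_le_one hM0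
      linarith only [hmn1, hMM]
    · rw [max_eq_right h]
      rcases le_total γ₁ 1 with h' | h'
      · rw [hmndef, min_eq_right h']
        have h0 : (0:ℝ) ≤ (γ₁ + γ₂)/2 := by linarith only [hγ₁.le, hγ₂.le]
        have hMM : (γ₁ + γ₂)/2 * ((γ₁ + γ₂)/2) ≤ M * M := mul_le_mul hM2 hM2 h0 hM0
        linarith only [hMM, sq_nonneg (γ₁ - γ₂)]
      · rw [hmndef, min_eq_left h']
        have hM3 : (1 + γ₂)/2 ≤ M := le_trans (by linarith only [h']) hM2
        have h0 : (0:ℝ) ≤ (1 + γ₂)/2 := by linarith only [hγ₂.le]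
        have hMM : (1 + γ₂)/2 * ((1 + γ₂)/2) ≤ M * M := mul_le_mul hM3 hM3 h0 hM0
        linarith only [hMM, sq_nonneg (1 - γ₂)]
  have hkey : mn^2 * d₂ ≤ M^2 * d₁ := by
    have a := mul_le_mul_of_nonneg_left hd2_le (sq_nonneg mn)
    have b := mul_le_mul_of_nonneg_left hkey0 hmn.le
    have c := mul_le_mul_of_nonneg_right hmn_d1 (sq_nonneg M)
    linarith only [a, b, c]
  have hC : 0 ≤ (γ₁ * L^2 / mn^2) * (M^2 / (g₁ - g₂)^2) :=
    mul_nonneg (div_nonneg (mul_nonneg hγ₁.le (sq_nonneg L)) (sq_nonneg mn))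
      (div_nonneg (sq_nonneg M) (sq_nonneg _))
  have hstep := mul_le_mul_of_nonneg_left hKL2 hC
  refine le_trans ?_ hstep
  have hmid : (γ₁ * L^2 / mn^2) * (M^2 / (g₁ - g₂)^2) * (μ * (1-μ) * (g₁ - g₂)^2 / (d₁ * d₂))
      = γ₁ * L^2 * M^2 * (μ * (1-μ)) / (mn^2 * (d₁ * d₂)) := by
    rw [div_mul_div_comm, div_mul_div_comm]
    rw [div_eq_div_iff (by positivity) (by positivity)]
    ring
  rw [hmid, div_le_div_iff₀ (pow_pos hd₁ 2) (mul_pos (pow_pos hmn 2) (mul_pos hd₁ hd₂))]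
  have hfin := mul_le_mul_of_nonneg_right hkey
    (mul_nonneg (mul_nonneg (mul_nonneg hγ₁.le (mul_nonneg hμ0.le hν.le)) (sq_nonneg L)) hd₁.le)
  linarith only [hfin]
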